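/- Let τ be the ℝ-algebra endomorphism of the polynomial ring over ℝ in the variables x_i, y_i (i ∈ ZMod n) determined by τ(x_i) = x_{1−i} and τ(y_i) = y_{−i}. Then τ(O_k) = O_k for every k with 1 ≤ k ≤ ⌊n/2⌋. -/
import Mathlib


open MvPolynomial

/-- The monomial `X_i = x_i y_i x_{i+1}` (`Sum.inl i ↦ x_i`, `Sum.inr i ↦ y_i`). -/
noncomputable def XmonO (n : ℕ) (i : ZMod n) : MvPolynomial (ZMod n ⊕ ZMod n) ℝ :=
  X (Sum.inl i) * X (Sum.inr i) * X (Sum.inl (i + 1))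

/-- Admissibility of the monomial `∏_{i ∈ S} X_i · ∏_{j ∈ T} x_j`: no two of the
factors are consecutive.  (`X_i, X_j` are consecutive iff `j - i ∈ {-2,-1,0,1,2}`;
`X_i, x_j` are consecutive iff `j - i ∈ {-1,0,1,2}`; `x_j, x_{j'}` are consecutive
iff `j' - j ∈ {-1,1}`.) -/
def AdmissibleO (n : ℕ) (S T : Finset (ZMod n)) : Prop :=
  (∀ i ∈ S, ∀ j ∈ S, i ≠ j → j - i ≠ 1 ∧ j - i ≠ 2) ∧
  (∀ i ∈ S, ∀ j ∈ T, j - i ≠ -1 ∧ j - i ≠ 0 ∧ j - i ≠ 1 ∧ j - i ≠ 2) ∧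
  (∀ j ∈ T, ∀ j' ∈ T, j ≠ j' → j' - j ≠ 1)

open scoped Classical in
/-- The monodromy invariant `O_k = ∑_{|O|=k} sign(O)·O`, the sum over all
admissible monomials of weight `k`. -/
noncomputable def Opoly (n : ℕ) [NeZero n] (k : ℕ) : MvPolynomial (ZMod n ⊕ ZMod n) ℝ :=
  ∑ S : Finset (ZMod n), ∑ T : Finset (ZMod n),
    if AdmissibleO n S T ∧ S.card + T.card = k then
      (-1 : MvPolynomial (ZMod n ⊕ ZMod n) ℝ) ^ T.card *
        ((∏ i ∈ S, XmonO n i) * ∏ j ∈ T, X (Sum.inl j))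
    else 0

lemma adm_map (n : ℕ) (S T : Finset (ZMod n)) (h : AdmissibleO n S T) :
    AdmissibleO n (S.image (fun i => -i)) (T.image (fun j => 1 - j)) := by
  obtain ⟨h1, h2, h3⟩ := h
  refine ⟨?_, ?_, ?_⟩
  · intro a ha b hb hne
    simp only [Finset.mem_image] at ha hb
    obtain ⟨i, hi, rfl⟩ := ha
    obtain ⟨j, hj, rfl⟩ := hb
    have hij : j ≠ i := fun e => hne (by rw [e])
    have := h1 j hj i hi hij
    constructor
    · intro hc; exact this.1 (by linear_combination hc)
    · intro hc; exact this.2 (by linear_combination hc)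
  · intro a ha b hb
    simp only [Finset.mem_image] at ha hb
    obtain ⟨i, hi, rfl⟩ := ha
    obtain ⟨j, hj, rfl⟩ := hb
    have := h2 i hi j hj
    refine ⟨fun hc => this.2.2.2 ?_, fun hc => this.2.2.1 ?_,
      fun hc => this.2.1 ?_, fun hc => this.1 ?_⟩ <;> linear_combination -hc
  · intro a ha b hb hne
    simp only [Finset.mem_image] at ha hb
    obtain ⟨j, hj, rfl⟩ := ha
    obtain ⟨j', hj', rfl⟩ := hb
    have hjj : j' ≠ j := fun e => hne (by rw [e])
    intro hc
    exact h3 j' hj' j hj hjj (by linear_combination hc)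

lemma adm_iff (n : ℕ) (S T : Finset (ZMod n)) :
    AdmissibleO n (S.image (fun i => -i)) (T.image (fun j => 1 - j)) ↔ AdmissibleO n S T := by
  constructor
  · intro h
    have h2 := adm_map n _ _ h
    rw [Finset.image_image, Finset.image_image] at h2
    have e1 : ((fun i : ZMod n => -i) ∘ fun i => -i) = id := funext fun i => neg_neg i
    have e2 : ((fun j : ZMod n => 1 - j) ∘ fun j => 1 - j) = id := funext fun j => sub_sub_cancel 1 j
    rwa [e1, e2, Finset.image_id, Finset.image_id] at h2
  · exact adm_map n S T

/-- Lemma 2.6: the involution `τ` determined by `τ(x_i) = x_{1-i}`, `τ(y_i) = y_{-i}`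
fixes each monodromy invariant `O_k`, `1 ≤ k ≤ ⌊n/2⌋`. -/
theorem stmt_6 (n : ℕ) [NeZero n] (hn : 5 ≤ n)
    (τ : MvPolynomial (ZMod n ⊕ ZMod n) ℝ →ₐ[ℝ] MvPolynomial (ZMod n ⊕ ZMod n) ℝ)
    (hτx : ∀ i : ZMod n, τ (X (Sum.inl i)) = X (Sum.inl (1 - i)))
    (hτy : ∀ i : ZMod n, τ (X (Sum.inr i)) = X (Sum.inr (-i)))
    (k : ℕ) (hk1 : 1 ≤ k) (hk2 : k ≤ n / 2) :
    τ (Opoly n k) = Opoly n k := by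
  classical
  have hX : ∀ i : ZMod n, τ (XmonO n i) = XmonO n (-i) := by
    intro i
    simp only [XmonO, map_mul, hτx, hτy]
    have e1 : (1 : ZMod n) - (i + 1) = -i := by ring
    have e2 : (-i) + 1 = 1 - i := by ring
    rw [e1, e2]; ring
  rw [Opoly, map_sum]
  simp only [map_sum, apply_ite τ, map_mul, map_pow, map_neg, map_one, map_prod, hX, hτx,
    map_zero]
  refine Fintype.sum_equiv ((Equiv.neg (ZMod n)).finsetCongr) _ _ (fun S => ?_)
  refine Fintype.sum_equiv ((Equiv.subLeft (1 : ZMod n)).finsetCongr) _ _ (fun T => ?_)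
  have hSeq : ((Equiv.neg (ZMod n)).finsetCongr S) = S.image (fun i => -i) := by
    rw [Equiv.finsetCongr_apply, Finset.map_eq_image]; rfl
  have hTeq : ((Equiv.subLeft (1 : ZMod n)).finsetCongr T) = T.image (fun j => 1 - j) := by
    rw [Equiv.finsetCongr_apply, Finset.map_eq_image]; rfl
  rw [hSeq, hTeq]
  have hcS : (S.image (fun i : ZMod n => -i)).card = S.card :=
    Finset.card_image_of_injective _ neg_injective
  have hcT : (T.image (fun j : ZMod n => 1 - j)).card = T.card :=
    Finset.card_image_of_injective _ (fun a b h => by linear_combination -h)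
  have hiff : (AdmissibleO n (S.image (fun i => -i)) (T.image (fun j => 1 - j)) ∧
      (S.image (fun i : ZMod n => -i)).card + (T.image (fun j : ZMod n => 1 - j)).card = k) ↔
      (AdmissibleO n S T ∧ S.card + T.card = k) := by
    rw [adm_iff, hcS, hcT]
  rw [if_congr hiff rfl rfl, hcT,
    Finset.prod_image (fun a _ b _ h => neg_injective h),
    Finset.prod_image (fun a _ b _ (h : 1 - a = 1 - b) => by linear_combination -h)]
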